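/- For every positive natural number n and every real number w with w > 1, the sequence r ↦ (1/n^r) · ∑_{k₁=1}^{n} ⋯ ∑_{k_r=1}^{n} gcd(n, k₁⋯k_r)^w, viewed as a sequence of real numbers indexed by r, tends to n^w as r → ∞, where powers with real exponent w are real powers (rpow). -/

import Mathlib

open Finset Filter

theorem stmt_7 (n : ℕ) (hn : 0 < n) (w : ℝ) (hw : 1 < w) :
    Filter.Tendsto
      (fun r : ℕ =>
        (1 / (n : ℝ) ^ r) *
          ∑ k ∈ Fintype.piFinset (fun _ : Fin r => Finset.Icc 1 n),
            (Nat.gcd n (∏ i, k i) : ℝ) ^ w)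
      Filter.atTop (nhds ((n : ℝ) ^ w)) := by
  have hn1 : (1:ℝ) ≤ n := by exact_mod_cast hn
  have hn0 : (0:ℝ) < n := by exact_mod_cast hn
  have hw0 : (0:ℝ) ≤ w := by linarith
  have hnr : ∀ r : ℕ, (0:ℝ) < (n:ℝ) ^ r := fun r => pow_pos hn0 r
  have hcard : ∀ r : ℕ,
      (Fintype.piFinset (fun _ : Fin r => Finset.Icc 1 n)).card = n ^ r := by
    intro r
    rw [Fintype.card_piFinset]
    simp [Nat.card_Icc]
  -- upper bound
  have hub : ∀ r : ℕ, (1 / (n : ℝ) ^ r) *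
      ∑ k ∈ Fintype.piFinset (fun _ : Fin r => Finset.Icc 1 n),
        (Nat.gcd n (∏ i, k i) : ℝ) ^ w ≤ (n:ℝ)^w := by
    intro r
    rw [div_mul_eq_mul_div, one_mul, div_le_iff₀ (hnr r)]
    calc ∑ k ∈ Fintype.piFinset (fun _ : Fin r => Finset.Icc 1 n),
          (Nat.gcd n (∏ i, k i) : ℝ) ^ w
        ≤ ∑ _k ∈ Fintype.piFinset (fun _ : Fin r => Finset.Icc 1 n), (n:ℝ)^w := by
          refine Finset.sum_le_sum fun k _ => ?_
          exact Real.rpow_le_rpow (by positivity)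
            (by exact_mod_cast Nat.gcd_le_left _ hn) hw0
      _ = (n:ℝ)^w * (n:ℝ)^r := by
          rw [Finset.sum_const, hcard, nsmul_eq_mul, mul_comm]
          push_cast
          ring
  -- lower bound
  have hlb : ∀ r : ℕ, (n:ℝ)^w - (n:ℝ)^w * (((n:ℝ)-1)/n)^r ≤
      (1 / (n : ℝ) ^ r) *
      ∑ k ∈ Fintype.piFinset (fun _ : Fin r => Finset.Icc 1 n),
        (Nat.gcd n (∏ i, k i) : ℝ) ^ w := by
    intro r
    set P := Fintype.piFinset (fun _ : Fin r => Finset.Icc 1 n)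
    set G := P.filter (fun k => n ∣ ∏ i, k i)
    set B := P.filter (fun k => ¬ n ∣ ∏ i, k i)
    have hBcard : B.card ≤ (n-1) ^ r := by
      have hsub : B ⊆ Fintype.piFinset (fun _ : Fin r => Finset.Icc 1 (n-1)) := by
        intro k hk
        simp only [B, P, Finset.mem_filter, Fintype.mem_piFinset, Finset.mem_Icc] at hk ⊢
        obtain ⟨hk1, hk2⟩ := hk
        intro i
        refine ⟨(hk1 i).1, ?_⟩
        have : k i ≠ n := by
          intro h
          exact hk2 (h ▸ Finset.dvd_prod_of_mem k (Finset.mem_univ i))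
        have h2 := (hk1 i).2
        omega
      calc B.card ≤ _ := Finset.card_le_card hsub
        _ = (n-1)^r := by rw [Fintype.card_piFinset]; simp [Nat.card_Icc]
    have hsum : G.card * (n:ℝ)^w ≤
        ∑ k ∈ P, (Nat.gcd n (∏ i, k i) : ℝ) ^ w := by
      calc (G.card : ℝ) * (n:ℝ)^w
          = ∑ k ∈ G, (Nat.gcd n (∏ i, k i) : ℝ) ^ w := by
            rw [Finset.sum_congr rfl (fun k hk => ?_), Finset.sum_const, nsmul_eq_mul]
            simp only [G, Finset.mem_filter] at hk
            rw [Nat.gcd_eq_left hk.2]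
        _ ≤ _ := Finset.sum_le_sum_of_subset_of_nonneg (Finset.filter_subset _ _)
            (fun k _ _ => by positivity)
    have hGcard : (n:ℝ)^r - ((n:ℝ)-1)^r ≤ (G.card : ℝ) := by
      have h1 : G.card + B.card = n ^ r := by
        rw [← hcard r]; exact Finset.card_filter_add_card_filter_not _
      have h2 : ((n-1:ℕ):ℝ) = (n:ℝ) - 1 := by
        push_cast [Nat.cast_sub hn]; ring
      have h3 : (B.card : ℝ) ≤ ((n:ℝ)-1)^r := by
        rw [← h2]; exact_mod_cast hBcard
      have h4 : (G.card:ℝ) + (B.card:ℝ) = (n:ℝ)^r := by exact_mod_cast h1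
      linarith
    rw [div_mul_eq_mul_div, one_mul, le_div_iff₀ (hnr r)]
    have hnw : (0:ℝ) ≤ (n:ℝ)^w := by positivity
    calc ((n:ℝ)^w - (n:ℝ)^w * (((n:ℝ)-1)/n)^r) * (n:ℝ)^r
        = (n:ℝ)^w * ((n:ℝ)^r - ((n:ℝ)-1)^r) := by
          rw [div_pow, sub_mul, mul_assoc, div_mul_cancel₀ _ (hnr r).ne']
          ring
      _ ≤ (n:ℝ)^w * G.card := by
          exact mul_le_mul_of_nonneg_left hGcard hnw
      _ = G.card * (n:ℝ)^w := by ring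
      _ ≤ _ := hsum
  refine tendsto_of_tendsto_of_tendsto_of_le_of_le ?_ tendsto_const_nhds hlb hub
  have hgeo : Tendsto (fun r : ℕ => (((n:ℝ)-1)/n)^r) atTop (nhds 0) := by
    apply tendsto_pow_atTop_nhds_zero_of_lt_one
    · exact div_nonneg (by linarith) hn0.le
    · rw [div_lt_one hn0]; linarith
  have := (tendsto_const_nhds (x := (n:ℝ)^w) (f := atTop)).sub (hgeo.const_mul ((n:ℝ)^w))
  simpa using this
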